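/- Let G be a finite group with an idempotent partial action on a k-algebra A, given by central idempotents {e_σ}_{σ∈G} and isomorphisms of ideals α_σ : A e_{σ⁻¹} → A e_σ, satisfying e_1 = 1, α_1 = id, and α_σ(α_τ(a e_{τ⁻¹}) e_{σ⁻¹}) = α_{στ}(a e_{τ⁻¹σ⁻¹}) e_σ for all σ, τ ∈ G and a ∈ A. Then in the A-bimodule C = ⊕_{σ∈G} A e_σ with bimodule structure a₁(a ν_σ)a₂ = a₁ a α_σ(a₂ e_{σ⁻¹}) ν_σ, coproduct Δ(a ν_σ) = Σ_{τ∈G} a ν_τ ⊗_A ν_{τ⁻¹σ} and counit ε(a ν_σ) = a δ_{σ,1}, the element g = Σ_{σ∈G} ν_σ is grouplike: Δ(g) = g ⊗_A g and ε(g) = 1. -/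
import Mathlib


open TensorProduct

noncomputable section

set_option synthInstance.maxHeartbeats 1000000
set_option maxHeartbeats 1000000

variable {k A : Type*} [CommRing k] [Ring A] [Algebra k A]
variable {G : Type*} [Group G] [Fintype G] [DecidableEq G]

/-- The underlying `k`-module `⊕_{σ ∈ G} A e_σ` of the coring associated to an idempotent
partial action, realised as the families `f : G → A` with `f σ ∈ A e_σ` for all `σ`. -/
def Csub (e : G → A) : Submodule k (G → A) where
  carrier := {f | ∀ σ, f σ * e σ = f σ}
  add_mem' := by intro f g hf hg σ; simp only [Pi.add_apply, add_mul, hf σ, hg σ]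
  zero_mem' := by intro σ; simp
  smul_mem' := by intro c f hf σ; simp only [Pi.smul_apply, smul_mul_assoc, hf σ]

/-- The element `ν_σ`, equal to `e_σ` in the `σ`-component and `0` elsewhere. -/
def nuEl (e : G → A) (he : ∀ σ, e σ * e σ = e σ) (σ : G) : Csub (k := k) e :=
  ⟨fun τ => if τ = σ then e σ else 0, by
    intro τ
    by_cases h : τ = σ
    · subst h; simp [he τ]
    · simp [h]⟩

/-- The grouplike element `∑_{σ ∈ G} ν_σ`, i.e. the family `σ ↦ e_σ`. -/
def glike (e : G → A) (he : ∀ σ, e σ * e σ = e σ) : Csub (k := k) e :=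
  ⟨fun σ => e σ, fun σ => he σ⟩

/-- The left `A`-action on `C`: `(a · f) σ = a * f σ`. -/
def lactC (e : G → A) (a : A) (c : Csub (k := k) e) : Csub (k := k) e :=
  ⟨fun σ => a * (c : G → A) σ, by intro σ; rw [mul_assoc, c.2 σ]⟩

/-- The right `A`-action on `C`: `(f · a) σ = f σ * α_σ (a e_{σ⁻¹})`. -/
def ractC (e : G → A) (α : G → A →ₗ[k] A) (hα : ∀ σ a, α σ a * e σ = α σ a)
    (c : Csub (k := k) e) (a : A) : Csub (k := k) e :=
  ⟨fun σ => (c : G → A) σ * α σ (a * e σ⁻¹), by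
    intro σ; rw [mul_assoc, hα σ (a * e σ⁻¹)]⟩

/-- The `A`-balancing relations defining `C ⊗_A C` inside `C ⊗_k C`. -/
def balC (e : G → A) (α : G → A →ₗ[k] A) (hα : ∀ σ a, α σ a * e σ = α σ a) :
    Submodule k ((Csub (k := k) e) ⊗[k] (Csub (k := k) e)) :=
  Submodule.span k {z | ∃ (c c' : Csub (k := k) e) (a : A),
    z = (ractC e α hα c a) ⊗ₜ[k] c' - c ⊗ₜ[k] (lactC e a c')}

/-- For an idempotent partial action of a finite group `G` on `A`, the element
`g = ∑_σ ν_σ` of the associated `A`-coring `C = ⊕_σ A e_σ` is grouplike: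
`Δ(g) = g ⊗_A g` (where `Δ(a ν_σ) = ∑_τ a ν_τ ⊗_A ν_{τ⁻¹σ}`) and `ε(g) = 1`
(where `ε(a ν_σ) = a δ_{σ,1}`, i.e. `ε f = f 1`). -/
theorem stmt_17 (e : G → A) (α : G → A →ₗ[k] A)
    (he_idem : ∀ σ, e σ * e σ = e σ)
    (he_central : ∀ σ a, e σ * a = a * e σ)
    (he_one : e 1 = 1)
    (hα_range : ∀ σ a, α σ a * e σ = α σ a)
    (hα_dom : ∀ σ a, α σ (a * e σ⁻¹) = α σ a)
    (hα_one : ∀ a, α 1 a = a)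
    (hα_mul : ∀ σ a b, α σ (a * b * e σ⁻¹) = α σ a * α σ b)
    (hα_unit : ∀ σ, α σ (e σ⁻¹) = e σ)
    (hα_inv : ∀ σ a, α σ⁻¹ (α σ a) = a * e σ⁻¹)
    (hcoc : ∀ σ τ a, α σ (α τ a * e σ⁻¹) = α (σ * τ) (a * e (σ * τ)⁻¹) * e σ) :
    -- `Δ(g) = g ⊗_A g` …
    ((∑ σ : G, ∑ τ : G,
        Submodule.Quotient.mk (p := balC (k := k) e α hα_range)
          ((lactC e (e σ) (nuEl e he_idem τ)) ⊗ₜ[k] (nuEl e he_idem (τ⁻¹ * σ)))) =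
      Submodule.Quotient.mk (p := balC (k := k) e α hα_range)
        ((glike e he_idem) ⊗ₜ[k] (glike e he_idem))) ∧
    -- … and `ε(g) = 1`
    ((glike (k := k) e he_idem : G → A) 1 = 1) := by
  constructor
  · have key : ∀ τ ρ : G,
        Submodule.Quotient.mk (p := balC (k := k) e α hα_range)
          ((lactC e (e (τ * ρ)) (nuEl e he_idem τ)) ⊗ₜ[k] (nuEl e he_idem ρ)) =
        Submodule.Quotient.mk (p := balC (k := k) e α hα_range)
          ((nuEl e he_idem τ) ⊗ₜ[k] (nuEl e he_idem ρ)) := by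
      intro τ ρ
      have hmov : α τ (e ρ * e τ⁻¹) = e (τ * ρ) * e τ := by
        have h1 := hcoc τ ρ 1
        have h2 : α ρ 1 = e ρ := by
          rw [← hα_dom ρ 1, one_mul, hα_unit]
        rw [h2, one_mul, hα_unit] at h1
        exact h1
      have h3 : lactC e (e (τ * ρ)) (nuEl e he_idem τ)
          = ractC e α hα_range (nuEl e he_idem τ) (e ρ) := by
        apply Subtype.ext
        funext σ
        show e (τ * ρ) * ((nuEl e he_idem τ : Csub (k := k) e) : G → A) σ
            = ((nuEl e he_idem τ : Csub (k := k) e) : G → A) σ * α σ (e ρ * e σ⁻¹)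
        by_cases h : σ = τ
        · subst h
          have hσ : ((nuEl (k := k) e he_idem σ : Csub (k := k) e) : G → A) σ = e σ := by
            simp [nuEl]
          rw [hσ, hmov, ← mul_assoc, he_central σ (e (σ * ρ)), mul_assoc, he_idem]
        · simp [nuEl, h]
      have h4 : lactC (k := k) e (e ρ) (nuEl e he_idem ρ) = nuEl e he_idem ρ := by
        apply Subtype.ext
        funext σ
        show e ρ * ((nuEl e he_idem ρ : Csub (k := k) e) : G → A) σ
            = ((nuEl e he_idem ρ : Csub (k := k) e) : G → A) σ
        by_cases h : σ = ρ
        · subst h; simp [nuEl, he_idem]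
        · simp [nuEl, h]
      rw [Submodule.Quotient.eq]
      apply Submodule.subset_span
      exact ⟨nuEl e he_idem τ, nuEl e he_idem ρ, e ρ, by rw [h3, h4]⟩
    have hg : (glike (k := k) e he_idem) = ∑ σ : G, nuEl e he_idem σ := by
      apply Subtype.ext
      have hc : ((∑ σ : G, nuEl e he_idem σ : Csub (k := k) e) : G → A)
          = ∑ σ : G, ((nuEl e he_idem σ : Csub (k := k) e) : G → A) := by
        exact_mod_cast Submodule.coe_sum _ _ _
      funext τ
      rw [hc]
      simp [glike, nuEl, Finset.sum_apply]
    calc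
      (∑ σ : G, ∑ τ : G,
          Submodule.Quotient.mk (p := balC (k := k) e α hα_range)
            ((lactC e (e σ) (nuEl e he_idem τ)) ⊗ₜ[k] (nuEl e he_idem (τ⁻¹ * σ))))
          = ∑ τ : G, ∑ σ : G,
            Submodule.Quotient.mk (p := balC (k := k) e α hα_range)
              ((lactC e (e σ) (nuEl e he_idem τ)) ⊗ₜ[k] (nuEl e he_idem (τ⁻¹ * σ))) :=
        Finset.sum_comm
      _ = ∑ τ : G, ∑ ρ : G,
            Submodule.Quotient.mk (p := balC (k := k) e α hα_range)
              ((lactC e (e (τ * ρ)) (nuEl e he_idem τ)) ⊗ₜ[k] (nuEl e he_idem ρ)) := by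
        refine Finset.sum_congr rfl fun τ _ => ?_
        refine Fintype.sum_equiv (Equiv.mulLeft τ⁻¹) _ _ fun ρ => ?_
        simp [Equiv.mulLeft, mul_inv_cancel_left]
      _ = ∑ τ : G, ∑ ρ : G,
            Submodule.Quotient.mk (p := balC (k := k) e α hα_range)
              ((nuEl e he_idem τ) ⊗ₜ[k] (nuEl e he_idem ρ)) := by
        exact Finset.sum_congr rfl fun τ _ => Finset.sum_congr rfl fun ρ _ => key τ ρ
      _ = Submodule.Quotient.mk (p := balC (k := k) e α hα_range)
            ((glike e he_idem) ⊗ₜ[k] (glike e he_idem)) := by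
        have hgg : ((glike e he_idem) ⊗ₜ[k] (glike e he_idem) :
            (Csub (k := k) e) ⊗[k] (Csub (k := k) e))
            = ∑ τ : G, ∑ ρ : G, (nuEl e he_idem τ) ⊗ₜ[k] (nuEl e he_idem ρ) := by
          rw [hg, TensorProduct.sum_tmul]
          exact Finset.sum_congr rfl fun τ _ => TensorProduct.tmul_sum _ _ _
        rw [hgg, ← Submodule.mkQ_apply, map_sum]
        simp only [map_sum, Submodule.mkQ_apply]
  · exact he_one
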